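/- For nonnegative measurable functions f, g on a set Ω of finite measure, ∫_0^{|Ω|} f*(s) g_*(s) ds ≤ ∫_Ω f g dx, where g_*(s) = g*(|Ω| − s) is the increasing rearrangement. -/

import Mathlib

open MeasureTheory Set
open scoped ENNReal NNReal

noncomputable def distFun {α : Type*} [MeasurableSpace α] (μ : Measure α) (f : α → ℝ) (t : ℝ) : ℝ≥0∞ :=
  μ {x | t < |f x|}

noncomputable def decRearr {α : Type*} [MeasurableSpace α] (μ : Measure α) (f : α → ℝ) (s : ℝ) : ℝ :=
  sInf {t : ℝ | 0 ≤ t ∧ distFun μ f t < ENNReal.ofReal s}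

section aux
variable {α : Type*} [MeasurableSpace α] (μ : Measure α) (f : α → ℝ)

lemma decRearr_nonneg (s : ℝ) : 0 ≤ decRearr μ f s :=
  Real.sInf_nonneg fun _ hx => hx.1

lemma le_distFun {s t : ℝ} (ht : 0 ≤ t) (h : t < decRearr μ f s) :
    ENNReal.ofReal s ≤ distFun μ f t := by
  by_contra hc
  push_neg at hc
  have hbd : BddBelow {t : ℝ | 0 ≤ t ∧ distFun μ f t < ENNReal.ofReal s} :=
    ⟨0, fun x hx => hx.1⟩
  exact absurd (csInf_le hbd ⟨ht, hc⟩) (not_le.2 h)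

lemma decRearr_measurable : Measurable (decRearr μ f) := by
  apply measurable_of_Ioi
  intro c
  rcases lt_or_ge c 0 with hc | hc
  · have : decRearr μ f ⁻¹' Ioi c = univ := by
      ext s; simp [lt_of_lt_of_le hc (decRearr_nonneg μ f s)]
    rw [this]; exact MeasurableSet.univ
  · apply Set.OrdConnected.measurableSet
    constructor
    intro x hx y hy z hz
    simp only [mem_preimage, mem_Ioi] at hx hy ⊢
    have hne : {t : ℝ | 0 ≤ t ∧ distFun μ f t < ENNReal.ofReal x}.Nonempty := by
      by_contra he
      rw [Set.not_nonempty_iff_eq_empty] at he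
      simp only [decRearr, he, Real.sInf_empty] at hx
      exact absurd hx (not_lt.2 hc)
    have hsub : {t : ℝ | 0 ≤ t ∧ distFun μ f t < ENNReal.ofReal x} ⊆
        {t : ℝ | 0 ≤ t ∧ distFun μ f t < ENNReal.ofReal z} := by
      intro t ht
      exact ⟨ht.1, lt_of_lt_of_le ht.2 (ENNReal.ofReal_le_ofReal hz.1)⟩
    have hne' : {t : ℝ | 0 ≤ t ∧ distFun μ f t < ENNReal.ofReal z}.Nonempty :=
      hne.mono hsub
    have hsub' : {t : ℝ | 0 ≤ t ∧ distFun μ f t < ENNReal.ofReal z} ⊆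
        {t : ℝ | 0 ≤ t ∧ distFun μ f t < ENNReal.ofReal y} := by
      intro t ht
      exact ⟨ht.1, lt_of_lt_of_le ht.2 (ENNReal.ofReal_le_ofReal hz.2)⟩
    calc c < decRearr μ f y := hy
    _ ≤ decRearr μ f z := csInf_le_csInf ⟨0, fun t ht => ht.1⟩ hne' hsub'

end aux

section layer
variable {β : Type*} [MeasurableSpace β]

lemma layer_single (c : ℝ) :
    ∫⁻ t in Ioi (0:ℝ), (Ioo (0:ℝ) c).indicator (1 : ℝ → ℝ≥0∞) t = ENNReal.ofReal c := by
  rw [lintegral_indicator_one measurableSet_Ioo, Measure.restrict_apply measurableSet_Ioo,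
    Set.inter_eq_left.2 Ioo_subset_Ioi_self, Real.volume_Ioo, sub_zero]

lemma ind_ne_top (c t : ℝ) : (Ioo (0:ℝ) c).indicator (1 : ℝ → ℝ≥0∞) t ≠ ∞ := by
  classical
  by_cases h : t ∈ Ioo (0:ℝ) c <;> simp [h]

lemma measSet_aux {φ : β → ℝ} (hφ : Measurable φ) (t : ℝ) :
    MeasurableSet {x | 0 < t ∧ t < φ x} := by
  rcases lt_or_ge 0 t with h0 | h0
  · have : {x | 0 < t ∧ t < φ x} = {x | t < φ x} := by ext x; simp [h0]
    rw [this]; exact measurableSet_lt measurable_const hφ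
  · have : {x | 0 < t ∧ t < φ x} = ∅ := by ext x; simp [not_lt.2 h0]
    rw [this]; exact MeasurableSet.empty

lemma meas_ind_fixed {φ : β → ℝ} (hφ : Measurable φ) (t : ℝ) :
    Measurable fun x => (Ioo (0:ℝ) (φ x)).indicator (1 : ℝ → ℝ≥0∞) t := by
  have he : (fun x => (Ioo (0:ℝ) (φ x)).indicator (1 : ℝ → ℝ≥0∞) t)
      = ({x | 0 < t ∧ t < φ x}).indicator (1 : β → ℝ≥0∞) := by
    ext x
    by_cases h : 0 < t ∧ t < φ x
    · simp [Set.indicator_apply, Set.mem_Ioo, h]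
    · simp only [Set.indicator_apply, Set.mem_Ioo, Set.mem_setOf_eq, if_neg h]
  rw [he]
  exact measurable_const.indicator (measSet_aux hφ t)

lemma meas_ind {φ : β → ℝ} (hφ : Measurable φ) :
    Measurable fun p : β × ℝ => (Ioo (0:ℝ) (φ p.1)).indicator (1 : ℝ → ℝ≥0∞) p.2 := by
  have he : (fun p : β × ℝ => (Ioo (0:ℝ) (φ p.1)).indicator (1 : ℝ → ℝ≥0∞) p.2)
      = ({p : β × ℝ | 0 < p.2 ∧ p.2 < φ p.1}).indicator (1 : β × ℝ → ℝ≥0∞) := by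
    ext p
    by_cases h : 0 < p.2 ∧ p.2 < φ p.1
    · simp [Set.indicator_apply, Set.mem_Ioo, h]
    · simp only [Set.indicator_apply, Set.mem_Ioo, Set.mem_setOf_eq, if_neg h]
  rw [he]
  exact measurable_const.indicator
    ((measurableSet_lt measurable_const measurable_snd).inter
      (measurableSet_lt measurable_snd (hφ.comp measurable_fst)))

lemma layer_repr (ν : Measure β) [SigmaFinite ν] (F G : β → ℝ)
    (hF : Measurable F) (hG : Measurable G) (hF0 : ∀ x, 0 ≤ F x) :
    ∫⁻ x, ENNReal.ofReal (F x * G x) ∂ν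
      = ∫⁻ t in Ioi (0:ℝ), ∫⁻ τ in Ioi (0:ℝ),
          ν ({x | 0 < t ∧ t < F x} ∩ {x | 0 < τ ∧ τ < G x}) := by
  have e1 : ∫⁻ x, ENNReal.ofReal (F x * G x) ∂ν
      = ∫⁻ x, (∫⁻ t in Ioi (0:ℝ),
          (Ioo (0:ℝ) (F x)).indicator (1 : ℝ → ℝ≥0∞) t * ENNReal.ofReal (G x)) ∂ν := by
    refine lintegral_congr fun x => ?_
    rw [lintegral_mul_const' _ _ ENNReal.ofReal_ne_top, layer_single,
      ← ENNReal.ofReal_mul (hF0 x)]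
  rw [e1]
  have m1 : Measurable fun p : β × ℝ =>
      (Ioo (0:ℝ) (F p.1)).indicator (1 : ℝ → ℝ≥0∞) p.2 * ENNReal.ofReal (G p.1) :=
    (meas_ind hF).mul (ENNReal.measurable_ofReal.comp (hG.comp measurable_fst))
  rw [lintegral_lintegral_swap m1.aemeasurable]
  refine setLIntegral_congr_fun measurableSet_Ioi (fun t _ => ?_)
  have e2 : ∫⁻ x, (Ioo (0:ℝ) (F x)).indicator (1 : ℝ → ℝ≥0∞) t * ENNReal.ofReal (G x) ∂ν
      = ∫⁻ x, (∫⁻ τ in Ioi (0:ℝ),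
          (Ioo (0:ℝ) (F x)).indicator (1 : ℝ → ℝ≥0∞) t *
            (Ioo (0:ℝ) (G x)).indicator (1 : ℝ → ℝ≥0∞) τ) ∂ν := by
    refine lintegral_congr fun x => ?_
    rw [lintegral_const_mul' _ _ (ind_ne_top (F x) t), layer_single]
  rw [e2]
  have m2 : Measurable fun p : β × ℝ =>
      (Ioo (0:ℝ) (F p.1)).indicator (1 : ℝ → ℝ≥0∞) t *
        (Ioo (0:ℝ) (G p.1)).indicator (1 : ℝ → ℝ≥0∞) p.2 :=
    ((meas_ind_fixed hF t).comp measurable_fst).mul (meas_ind hG)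
  rw [lintegral_lintegral_swap m2.aemeasurable]
  refine setLIntegral_congr_fun measurableSet_Ioi (fun τ _ => ?_)
  have e3 : ∀ x : β, (Ioo (0:ℝ) (F x)).indicator (1 : ℝ → ℝ≥0∞) t *
        (Ioo (0:ℝ) (G x)).indicator (1 : ℝ → ℝ≥0∞) τ
      = ({x | 0 < t ∧ t < F x} ∩ {x | 0 < τ ∧ τ < G x}).indicator (1 : β → ℝ≥0∞) x := by
    intro x
    by_cases h1 : 0 < t ∧ t < F x <;> by_cases h2 : 0 < τ ∧ τ < G x <;>
      simp [Set.indicator_apply, Set.mem_Ioo, h1, h2]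
  rw [lintegral_congr e3, lintegral_indicator_one ((measSet_aux hF t).inter (measSet_aux hG τ))]

end layer

/-- Reverse Hardy–Littlewood inequality with the increasing rearrangement
    g_*(s) = g*(|Ω| - s). -/
theorem hardy_littlewood_increasing {α : Type*} [MeasurableSpace α]
    (μ : Measure α) [IsFiniteMeasure μ] (f g : α → ℝ)
    (hf : Measurable f) (hg : Measurable g)
    (hf0 : ∀ x, 0 ≤ f x) (hg0 : ∀ x, 0 ≤ g x) :
    ∫⁻ s in Set.Ioc (0 : ℝ) (μ Set.univ).toReal,
        ENNReal.ofReal (decRearr μ f s * decRearr μ g ((μ Set.univ).toReal - s))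
      ≤ ∫⁻ x, ENNReal.ofReal (f x * g x) ∂μ := by
  set M := (μ Set.univ).toReal with hM
  have hFmeas : Measurable (decRearr μ f) := decRearr_measurable μ f
  have hGmeas : Measurable (fun s => decRearr μ g (M - s)) :=
    (decRearr_measurable μ g).comp (measurable_const.sub measurable_id)
  have hrepr1 :
      ∫⁻ s in Set.Ioc (0:ℝ) M, ENNReal.ofReal (decRearr μ f s * decRearr μ g (M - s))
        = ∫⁻ t in Ioi (0:ℝ), ∫⁻ τ in Ioi (0:ℝ),
            (volume.restrict (Set.Ioc (0:ℝ) M))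
              ({s | 0 < t ∧ t < decRearr μ f s} ∩
                {s | 0 < τ ∧ τ < decRearr μ g (M - s)}) :=
    layer_repr _ _ _ hFmeas hGmeas (fun s => decRearr_nonneg μ f s)
  have hrepr2 :
      ∫⁻ x, ENNReal.ofReal (f x * g x) ∂μ
        = ∫⁻ t in Ioi (0:ℝ), ∫⁻ τ in Ioi (0:ℝ),
            μ ({x | 0 < t ∧ t < f x} ∩ {x | 0 < τ ∧ τ < g x}) :=
    layer_repr μ f g hf hg hf0
  rw [hrepr1, hrepr2]
  refine lintegral_mono fun t => lintegral_mono fun τ => ?_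
  rcases le_or_gt t 0 with ht | ht
  · have h0 : {s : ℝ | 0 < t ∧ t < decRearr μ f s} = ∅ := by
      ext s; simp [not_lt.2 ht]
    rw [h0, Set.empty_inter]
    simp
  rcases le_or_gt τ 0 with hτ | hτ
  · have h0 : {s : ℝ | 0 < τ ∧ τ < decRearr μ g (M - s)} = ∅ := by
      ext s; simp [not_lt.2 hτ]
    rw [h0, Set.inter_empty]
    simp
  -- main case : 0 < t, 0 < τ
  have eS1 : {s : ℝ | 0 < t ∧ t < decRearr μ f s} = {s | t < decRearr μ f s} := by
    ext s; simp [ht]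
  have eS2 : {s : ℝ | 0 < τ ∧ τ < decRearr μ g (M - s)}
      = {s | τ < decRearr μ g (M - s)} := by
    ext s; simp [hτ]
  have eT1 : {x | 0 < t ∧ t < f x} = {x | t < f x} := by ext x; simp [ht]
  have eT2 : {x | 0 < τ ∧ τ < g x} = {x | τ < g x} := by ext x; simp [hτ]
  rw [eS1, eS2, eT1, eT2]
  set A : ℝ≥0∞ := μ {x | t < f x} with hA
  set B : ℝ≥0∞ := μ {x | τ < g x} with hB
  set C : ℝ≥0∞ := μ ({x | t < f x} ∩ {x | τ < g x}) with hC
  have hAtop : A ≠ ∞ := measure_ne_top μ _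
  have hBtop : B ≠ ∞ := measure_ne_top μ _
  have hCtop : C ≠ ∞ := measure_ne_top μ _
  have hdf : distFun μ f t = A := by
    rw [hA, distFun]
    congr 1
    ext x
    simp [abs_of_nonneg (hf0 x)]
  have hdg : distFun μ g τ = B := by
    rw [hB, distFun]
    congr 1
    ext x
    simp [abs_of_nonneg (hg0 x)]
  set a : ℝ := A.toReal with ha
  set b : ℝ := B.toReal with hb
  -- the measurable sets
  have hmeasS : MeasurableSet ({s : ℝ | t < decRearr μ f s} ∩
      {s | τ < decRearr μ g (M - s)}) :=
    (measurableSet_lt measurable_const hFmeas).inter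
      (measurableSet_lt measurable_const hGmeas)
  have hsub : ({s : ℝ | t < decRearr μ f s} ∩ {s | τ < decRearr μ g (M - s)})
      ∩ Set.Ioc (0:ℝ) M ⊆ Set.Icc (M - b) a := by
    rintro s ⟨⟨h1, h2⟩, _⟩
    constructor
    · have hle : ENNReal.ofReal (M - s) ≤ B := by
        rw [← hdg]; exact le_distFun μ g hτ.le h2
      have : M - s ≤ b := (ENNReal.ofReal_le_iff_le_toReal hBtop).1 hle
      linarith
    · have hle : ENNReal.ofReal s ≤ A := by
        rw [← hdf]; exact le_distFun μ f ht.le h1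
      exact (ENNReal.ofReal_le_iff_le_toReal hAtop).1 hle
  have hab : a + b ≤ C.toReal + M := by
    have h1 : A + B = μ ({x | t < f x} ∪ {x | τ < g x}) + C := by
      rw [hA, hB, hC, measure_union_add_inter _ (measurableSet_lt measurable_const hg)]
    have h2 : A + B ≤ μ Set.univ + C := by
      rw [h1]
      exact add_le_add_left (measure_mono (μ := μ) (Set.subset_univ _)) C
    have h3 : (A + B).toReal ≤ (μ Set.univ + C).toReal :=
      ENNReal.toReal_mono (by finiteness) h2
    rw [ENNReal.toReal_add hAtop hBtop, ENNReal.toReal_add (measure_ne_top μ _) hCtop] at h3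
    linarith
  calc (volume.restrict (Set.Ioc (0:ℝ) M))
        ({s : ℝ | t < decRearr μ f s} ∩ {s | τ < decRearr μ g (M - s)})
      = volume (({s : ℝ | t < decRearr μ f s} ∩ {s | τ < decRearr μ g (M - s)})
          ∩ Set.Ioc (0:ℝ) M) := Measure.restrict_apply hmeasS
    _ ≤ volume (Set.Icc (M - b) a) := measure_mono hsub
    _ = ENNReal.ofReal (a - (M - b)) := Real.volume_Icc
    _ ≤ C := by
        rw [← ENNReal.ofReal_toReal hCtop]
        exact ENNReal.ofReal_le_ofReal (by linarith)
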